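/- Let f : C → C be holomorphic on the right half-plane H = {Re(z) > c₁}, where c₁ > 1/2, and suppose |f(z) - z - 1| < c₀/(Re z)^r on H for constants c₀ > 0, r > 1. If additionally ∑_{k≥1} c₀/(c₁ + k - 3/2)^r < 1/2, then for every z ∈ H and every n ≥ 1, all iterates f^k(z) for k ≤ n are defined and lie in H, and Re(f^n(z)) > Re(z) + n - ∑_{k=1}^{n} c₀/(Re(z) + k - 3/2)^r. -/

import Mathlib

theorem stmt5 (f : ℂ → ℂ) (c₀ c₁ r : ℝ) (hc₀ : 0 < c₀) (hr : 1 < r) (hc₁ : 1 / 2 < c₁)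
    (hf : DifferentiableOn ℂ f {z : ℂ | c₁ < z.re})
    (hbound : ∀ z : ℂ, c₁ < z.re → ‖f z - z - 1‖ < c₀ / z.re ^ r)
    (htail : ∑' k : ℕ, c₀ / (c₁ + ((k : ℝ) + 1) - 3 / 2) ^ r < 1 / 2) :
    ∀ z : ℂ, c₁ < z.re → ∀ n : ℕ, 1 ≤ n →
      (∀ k ≤ n, c₁ < (f^[k] z).re) ∧
      (f^[n] z).re > z.re + n - ∑ k ∈ Finset.Icc 1 n, c₀ / (z.re + (k : ℝ) - 3 / 2) ^ r := by
  have hr0 : (0:ℝ) < r := by linarith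
  have ha : (0:ℝ) < c₁ - 1/2 := by linarith
  -- summability of the tail series
  have hsum : Summable (fun k : ℕ => c₀ / (c₁ + ((k : ℝ) + 1) - 3 / 2) ^ r) := by
    set m : ℝ := min (c₁ - 1/2) 1 with hm
    have hm0 : 0 < m := lt_min ha one_pos
    have hbase : Summable (fun k : ℕ => (((k:ℝ))^r)⁻¹) :=
      (Real.summable_nat_rpow_inv).2 hr
    have hshift : Summable (fun k : ℕ => (((k:ℝ) + 1)^r)⁻¹) := by
      have := (summable_nat_add_iff (f := fun k : ℕ => (((k:ℝ))^r)⁻¹) 1).2 hbase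
      convert this using 2 with k
      push_cast
      exacts [rfl, by push_cast; ring]
    have hg : Summable (fun k : ℕ => (c₀ / m^r) * (((k:ℝ) + 1)^r)⁻¹) := hshift.mul_left _
    apply Summable.of_nonneg_of_le _ _ hg
    · intro k
      have : (0:ℝ) < c₁ + ((k : ℝ) + 1) - 3 / 2 := by
        have : (0:ℝ) ≤ (k:ℝ) := Nat.cast_nonneg k
        linarith
      positivity
    · intro k
      have hk0 : (0:ℝ) ≤ (k:ℝ) := Nat.cast_nonneg k
      have h1 : m * ((k:ℝ) + 1) ≤ c₁ + ((k : ℝ) + 1) - 3 / 2 := by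
        have h2 : m ≤ c₁ - 1/2 := min_le_left _ _
        have h3 : m ≤ 1 := min_le_right _ _
        nlinarith
      have h4 : (m * ((k:ℝ) + 1))^r ≤ (c₁ + ((k : ℝ) + 1) - 3 / 2)^r :=
        Real.rpow_le_rpow (by positivity) h1 hr0.le
      have h5 : (m * ((k:ℝ) + 1))^r = m^r * ((k:ℝ) + 1)^r :=
        Real.mul_rpow hm0.le (by positivity)
      rw [h5] at h4
      have hmr : (0:ℝ) < m^r * ((k:ℝ)+1)^r := by positivity
      calc c₀ / (c₁ + ((k : ℝ) + 1) - 3 / 2) ^ r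
          ≤ c₀ / (m^r * ((k:ℝ) + 1)^r) := by
            apply div_le_div_of_nonneg_left hc₀.le hmr h4
        _ = (c₀ / m^r) * (((k:ℝ) + 1)^r)⁻¹ := by
            rw [div_mul_eq_div_div, div_eq_mul_inv]
  have htermnn : ∀ k : ℕ, 0 ≤ c₀ / (c₁ + ((k : ℝ) + 1) - 3 / 2) ^ r := by
    intro k
    have : (0:ℝ) < c₁ + ((k : ℝ) + 1) - 3 / 2 := by
      have : (0:ℝ) ≤ (k:ℝ) := Nat.cast_nonneg k
      linarith
    positivity
  -- finite partial sums are < 1/2, even with z.re ≥ c₁ in place of c₁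
  have hSbound : ∀ w : ℝ, c₁ ≤ w → ∀ m : ℕ,
      ∑ k ∈ Finset.Icc 1 m, c₀ / (w + (k : ℝ) - 3 / 2) ^ r < 1/2 := by
    intro w hw m
    have step1 : ∑ k ∈ Finset.Icc 1 m, c₀ / (w + (k : ℝ) - 3 / 2) ^ r
        ≤ ∑ k ∈ Finset.Icc 1 m, c₀ / (c₁ + (k : ℝ) - 3 / 2) ^ r := by
      apply Finset.sum_le_sum
      intro k hk
      have hk1 : 1 ≤ k := (Finset.mem_Icc.1 hk).1
      have hk1' : (1:ℝ) ≤ (k:ℝ) := by exact_mod_cast hk1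
      have hp : (0:ℝ) < c₁ + (k:ℝ) - 3/2 := by linarith
      apply div_le_div_of_nonneg_left hc₀.le (by positivity)
      exact Real.rpow_le_rpow hp.le (by linarith) hr0.le
    have step2 : ∑ k ∈ Finset.Icc 1 m, c₀ / (c₁ + (k : ℝ) - 3 / 2) ^ r
        ≤ ∑' k : ℕ, c₀ / (c₁ + ((k : ℝ) + 1) - 3 / 2) ^ r := by
      have hre : ∑ k ∈ Finset.Icc 1 m, c₀ / (c₁ + (k : ℝ) - 3 / 2) ^ r
          = ∑ k ∈ Finset.range m, c₀ / (c₁ + ((k : ℝ) + 1) - 3 / 2) ^ r := by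
        rw [← Finset.Ico_add_one_right_eq_Icc, Finset.sum_Ico_eq_sum_range]
        apply Finset.sum_congr rfl
        intro i _
        have : c₁ + ((1:ℕ) + i : ℕ) - 3/2 = c₁ + ((i:ℝ) + 1) - 3/2 := by push_cast; ring
        rw [this]
      rw [hre]
      exact Summable.sum_le_tsum _ (fun k _ => htermnn k) hsum
    linarith
  -- the one-step estimate
  have hstep : ∀ w : ℂ, c₁ < w.re → (f w).re > w.re + 1 - c₀ / w.re ^ r := by
    intro w hw
    have h1 := hbound w hw
    have h2 : |(f w - w - 1).re| ≤ ‖f w - w - 1‖ := Complex.abs_re_le_norm _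
    have h3 : (f w - w - 1).re = (f w).re - w.re - 1 := by simp
    rw [h3] at h2
    have := abs_lt.1 (lt_of_le_of_lt h2 h1)
    linarith [this.1]
  -- single term < 1/2
  have hhalf : ∀ x : ℝ, c₁ < x → c₀ / x ^ r < 1/2 := by
    intro x hx
    have h1 : c₀ / x ^ r ≤ c₀ / (c₁ - 1/2) ^ r := by
      apply div_le_div_of_nonneg_left hc₀.le (by positivity)
      exact Real.rpow_le_rpow ha.le (by linarith) hr0.le
    have h2 := hSbound c₁ le_rfl 1
    have h3 : ∑ k ∈ (Finset.Icc 1 1 : Finset ℕ), c₀ / (c₁ + (k : ℝ) - 3 / 2) ^ r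
        = c₀ / (c₁ - 1/2) ^ r := by
      rw [Finset.Icc_self, Finset.sum_singleton,
        show (c₁ + ((1:ℕ):ℝ) - 3/2) = c₁ - 1/2 by push_cast; ring]
    rw [h3] at h2
    linarith
  intro z hz n hn
  have key : ∀ m : ℕ, 1 ≤ m → c₁ < (f^[m] z).re ∧
      (f^[m] z).re > z.re + m - ∑ k ∈ Finset.Icc 1 m, c₀ / (z.re + (k : ℝ) - 3 / 2) ^ r := by
    intro m hm
    induction m with
    | zero => omega
    | succ n ih =>
      rcases Nat.eq_zero_or_pos n with h0 | h1
      · subst h0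
        simp only [zero_add, Function.iterate_one]
        have hst := hstep z hz
        have hh := hhalf z.re hz
        have hzre : (1:ℝ)/2 < z.re := lt_trans hc₁ hz
        have hb : c₀ / z.re ^ r ≤ c₀ / (z.re + 1 - 3/2) ^ r := by
          apply div_le_div_of_nonneg_left hc₀.le (Real.rpow_pos_of_pos (by linarith) r)
          exact Real.rpow_le_rpow (by linarith) (by linarith) hr0.le
        have hsum1 : ∑ k ∈ (Finset.Icc 1 1 : Finset ℕ), c₀ / (z.re + (k : ℝ) - 3 / 2) ^ r
            = c₀ / (z.re + 1 - 3/2) ^ r := by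
          rw [Finset.Icc_self, Finset.sum_singleton]
          norm_num
        constructor
        · linarith
        · rw [hsum1]
          push_cast
          linarith
      · obtain ⟨hw, hw2⟩ := ih h1
        set w := f^[n] z with hwdef
        have hit : f^[n+1] z = f w := Function.iterate_succ_apply' f n z
        have hS : ∑ k ∈ Finset.Icc 1 n, c₀ / (z.re + (k : ℝ) - 3 / 2) ^ r < 1/2 :=
          hSbound z.re hz.le n
        have hn1 : (1:ℝ) ≤ (n:ℝ) := by exact_mod_cast h1
        have hwge : w.re > z.re + n - 1/2 := by linarith
        have hst := hstep w hw
        have hp : (0:ℝ) < z.re + ((n:ℝ)+1) - 3/2 := by linarith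
        have hb : c₀ / w.re ^ r ≤ c₀ / (z.re + ((n:ℝ)+1) - 3/2) ^ r := by
          apply div_le_div_of_nonneg_left hc₀.le (Real.rpow_pos_of_pos hp r)
          exact Real.rpow_le_rpow hp.le (by linarith) hr0.le
        have hsumsucc : ∑ k ∈ Finset.Icc 1 (n+1), c₀ / (z.re + (k : ℝ) - 3 / 2) ^ r
            = (∑ k ∈ Finset.Icc 1 n, c₀ / (z.re + (k : ℝ) - 3 / 2) ^ r)
              + c₀ / (z.re + ((n:ℝ)+1) - 3/2) ^ r := by
          rw [Finset.sum_Icc_succ_top (by omega : 1 ≤ n+1)]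
          have : z.re + ((n+1 : ℕ) : ℝ) - 3/2 = z.re + ((n:ℝ)+1) - 3/2 := by push_cast; ring
          rw [this]
        have hS' : ∑ k ∈ Finset.Icc 1 (n+1), c₀ / (z.re + (k : ℝ) - 3 / 2) ^ r < 1/2 :=
          hSbound z.re hz.le (n+1)
        have hmain : (f^[n+1] z).re > z.re + ((n:ℝ)+1)
            - ∑ k ∈ Finset.Icc 1 (n+1), c₀ / (z.re + (k : ℝ) - 3 / 2) ^ r := by
          rw [hit, hsumsucc]
          linarith
        constructor
        · have : z.re + ((n:ℝ)+1) - 1/2 > c₁ := by linarith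
          calc c₁ < z.re + ((n:ℝ)+1) - 1/2 := this
            _ ≤ z.re + ((n:ℝ)+1)
                - ∑ k ∈ Finset.Icc 1 (n+1), c₀ / (z.re + (k : ℝ) - 3 / 2) ^ r := by linarith
            _ < (f^[n+1] z).re := hmain
        · push_cast
          push_cast at hmain
          linarith
  refine ⟨?_, (key n hn).2⟩
  intro k hk
  rcases Nat.eq_zero_or_pos k with h0 | h1
  · subst h0; simpa using hz
  · exact (key k h1).1
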